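/- Let r ∈ ℕ and let P_f(ℕ) = A₁ ∪ A₂ ∪ … ∪ A_r be a partition of the collection of finite nonempty subsets of ℕ into r pieces. Then there exist i ∈ {1,…,r} and a sequence ⟨F_n⟩_{n=1}^∞ of finite nonempty subsets of ℕ with max F_n < min F_{n+1} for each n ∈ ℕ, such that ⋃_{n∈G} F_n ∈ A_i for every finite nonempty set G ⊆ ℕ. -/

import Mathlib

open Finset

/-- The binary support of a natural number, as a `Finset`. -/
private def suppN (n : ℕ) : Finset ℕ := n.bitIndices.toFinset

private lemma suppN_sum_two_pow (n : ℕ) : ∑ i ∈ suppN n, 2 ^ i = n := by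
  rw [suppN, List.sum_toFinset _ Nat.bitIndices_sorted.nodup, Nat.twoPowSum_bitIndices]

private lemma suppN_encode (H : Finset ℕ) : suppN (∑ i ∈ H, 2 ^ i) = H := by
  have h1 : ∑ i ∈ H, 2 ^ i = ((H.sort (· ≤ ·)).map (2 ^ ·)).sum := by
    rw [← List.sum_toFinset _ (H.sort_nodup _), Finset.sort_toFinset]
  rw [suppN, h1, Nat.bitIndices_twoPowsum (H.sortedLT_sort), Finset.sort_toFinset]

private lemma suppN_nonempty {n : ℕ} (h : n ≠ 0) : (suppN n).Nonempty := by
  rcases (suppN n).eq_empty_or_nonempty with he | hne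
  · exfalso; apply h
    have := suppN_sum_two_pow n
    rw [he, Finset.sum_empty] at this
    omega
  · exact hne

private lemma lt_of_mem_suppN {x n : ℕ} (h : x ∈ suppN n) : x < n := by
  have h2 : 2 ^ x ≤ n := Nat.two_pow_le_of_mem_bitIndices (List.mem_toFinset.mp h)
  have := Nat.lt_two_pow_self (n := x)
  omega

private lemma le_of_mem_suppN_of_dvd {K n x : ℕ} (hd : 2 ^ K ∣ n) (hx : x ∈ suppN n) :
    K ≤ x := by
  obtain ⟨m, rfl⟩ := hd
  rw [suppN, Nat.bitIndices_two_pow_mul] at hx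
  obtain ⟨z, _, rfl⟩ := List.mem_map.mp (List.mem_toFinset.mp hx)
  omega

private lemma FS_pos : ∀ (a : Stream' ℕ), (∀ n, 0 < a n) → ∀ m ∈ Hindman.FS a, 0 < m := by
  intro a ha m hm
  induction hm with
  | head' a => exact ha 0
  | tail' a m h ih => exact ih fun n => ha (n + 1)
  | cons' a m h ih => exact Nat.add_pos_left (ha 0) m

private lemma exists_block (b : ℕ → ℕ) (p K : ℕ) :
    ∃ q : ℕ × ℕ, p ≤ q.1 ∧ q.1 < q.2 ∧ 2 ^ K ∣ ∑ j ∈ Finset.Ico q.1 q.2, b j := by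
  set S : ℕ → ℕ := fun t => ∑ j ∈ Finset.range t, b j with hS
  have key : ∀ x y : ℕ, x < y → S (p + x) % 2 ^ K = S (p + y) % 2 ^ K →
      ∃ q : ℕ × ℕ, p ≤ q.1 ∧ q.1 < q.2 ∧ 2 ^ K ∣ ∑ j ∈ Finset.Ico q.1 q.2, b j := by
    intro x y hxy heq
    refine ⟨(p + x, p + y), Nat.le_add_right _ _, by simp; omega, ?_⟩
    have hsum : S (p + x) + ∑ j ∈ Finset.Ico (p + x) (p + y), b j = S (p + y) := by
      simp only [hS, Finset.range_eq_Ico]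
      exact Finset.sum_Ico_consecutive _ (Nat.zero_le _) (by omega)
    have h2 : S (p + x) + (∑ j ∈ Finset.Ico (p + x) (p + y), b j) ≡ S (p + x) + 0
        [MOD 2 ^ K] := by
      rw [hsum, Nat.add_zero]
      exact heq.symm
    exact Nat.modEq_zero_iff_dvd.mp (Nat.ModEq.add_left_cancel' _ h2)
  have hpow : 0 < 2 ^ K := Nat.pow_pos (by norm_num)
  have maps : ∀ t ∈ Finset.range (2 ^ K + 1), S (p + t) % 2 ^ K ∈ Finset.range (2 ^ K) :=
    fun t _ => Finset.mem_range.mpr (Nat.mod_lt _ hpow)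
  obtain ⟨x, _, y, _, hxy, hfeq⟩ :=
    Finset.exists_ne_map_eq_of_card_lt_of_maps_to (by simp) maps
  rcases lt_or_gt_of_ne hxy with h | h
  · exact key x y h hfeq
  · exact key y x h hfeq.symm

private noncomputable def blkN (b : ℕ → ℕ) : ℕ → ℕ × ℕ
  | 0 => (exists_block b 0 0).choose
  | n + 1 => (exists_block b (blkN b n).2
      (∑ j ∈ Finset.Ico (blkN b n).1 (blkN b n).2, b j)).choose

/-- The `n`-th block sum. -/
private noncomputable def csumN (b : ℕ → ℕ) (n : ℕ) : ℕ :=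
  ∑ j ∈ Finset.Ico (blkN b n).1 (blkN b n).2, b j

private lemma blkN_lt (b : ℕ → ℕ) (n : ℕ) : (blkN b n).1 < (blkN b n).2 := by
  cases n with
  | zero => exact (exists_block b 0 0).choose_spec.2.1
  | succ n => exact (exists_block b (blkN b n).2 _).choose_spec.2.1

private lemma blkN_le (b : ℕ → ℕ) (n : ℕ) : (blkN b n).2 ≤ (blkN b (n + 1)).1 :=
  (exists_block b (blkN b n).2 _).choose_spec.1

private lemma blkN_dvd (b : ℕ → ℕ) (n : ℕ) : 2 ^ (csumN b n) ∣ csumN b (n + 1) :=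
  (exists_block b (blkN b n).2 _).choose_spec.2.2

private lemma blkN_chain (b : ℕ → ℕ) : ∀ {n m : ℕ}, n < m → (blkN b n).2 ≤ (blkN b m).1 := by
  intro n m h
  induction m with
  | zero => omega
  | succ m ih =>
    rcases Nat.lt_succ_iff_lt_or_eq.mp h with h' | rfl
    · exact le_trans (ih h') (le_trans (le_of_lt (blkN_lt b m)) (blkN_le b m))
    · exact blkN_le b n

theorem hindman_finite_unions (r : ℕ) (hr : 0 < r) (A : Fin r → Set (Finset ℕ))
    (hcover : ∀ H : Finset ℕ, H.Nonempty → ∃ i, H ∈ A i) :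
    ∃ i : Fin r, ∃ F : ℕ → Finset ℕ, (∀ n, (F n).Nonempty) ∧
      (∀ n, ∀ a ∈ F n, ∀ b ∈ F (n + 1), a < b) ∧
      ∀ G : Finset ℕ, G.Nonempty → G.biUnion F ∈ A i := by
  classical
  set B : Fin r → Set ℕ := fun i => {n | 0 < n ∧ suppN n ∈ A i} with hB
  have hcov2 : Hindman.FS ((fun _ => 1 : ℕ → ℕ) : Stream' ℕ) ⊆ ⋃₀ (Set.range B) := by
    intro m hm
    have hpos : 0 < m := FS_pos _ (fun _ => Nat.one_pos) m hm
    obtain ⟨i, hi⟩ := hcover (suppN m) (suppN_nonempty hpos.ne')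
    exact ⟨B i, Set.mem_range_self i, hpos, hi⟩
  obtain ⟨c, ⟨i, rfl⟩, b, hb⟩ :=
    Hindman.FS_partition_regular _ (Set.range B) (Set.finite_range B) hcov2
  -- block sums and their supports
  set F : ℕ → Finset ℕ := fun n => suppN (csumN b n) with hF
  -- every finite sum of block sums lands in `B i`
  have hdisjIco : (∀ (G : Finset ℕ), (↑G : Set ℕ).PairwiseDisjoint
      fun n => Finset.Ico (blkN b n).1 (blkN b n).2) := by
    intro G x _ y _ hxy
    have key : ∀ u v : ℕ, u < v →
        Disjoint (Finset.Ico (blkN b u).1 (blkN b u).2)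
          (Finset.Ico (blkN b v).1 (blkN b v).2) := by
      intro u v huv
      rw [Finset.disjoint_left]
      intro z hz hz'
      rw [Finset.mem_Ico] at hz hz'
      have := blkN_chain b huv
      omega
    rcases lt_or_gt_of_ne hxy with h | h
    · exact key x y h
    · exact (key y x h).symm
  have hsum_mem : ∀ G : Finset ℕ, G.Nonempty → (∑ n ∈ G, csumN b n) ∈ B i := by
    intro G hG
    apply hb
    have heq : ∑ n ∈ G, csumN b n =
        ∑ j ∈ G.biUnion (fun n => Finset.Ico (blkN b n).1 (blkN b n).2), b j :=
      (Finset.sum_biUnion (hdisjIco G)).symm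
    rw [heq]
    have hne : (G.biUnion fun n => Finset.Ico (blkN b n).1 (blkN b n).2).Nonempty := by
      obtain ⟨n, hn⟩ := hG
      obtain ⟨z, hz⟩ := Finset.nonempty_Ico.mpr (blkN_lt b n)
      exact ⟨z, Finset.mem_biUnion.mpr ⟨n, hn, hz⟩⟩
    exact Hindman.FS.finset_sum b _ hne
  have hpos : ∀ n, 0 < csumN b n := by
    intro n
    have := hsum_mem {n} ⟨n, Finset.mem_singleton_self n⟩
    rw [Finset.sum_singleton] at this
    exact this.1
  have hne : ∀ n, (F n).Nonempty := fun n => suppN_nonempty (hpos n).ne'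
  have hconsec : ∀ n, ∀ a ∈ F n, ∀ c ∈ F (n + 1), a < c := by
    intro n a ha c hc
    have h1 : a < csumN b n := lt_of_mem_suppN ha
    have h2 : csumN b n ≤ c := le_of_mem_suppN_of_dvd (blkN_dvd b n) hc
    omega
  have hchain : ∀ n m, n < m → ∀ a ∈ F n, ∀ c ∈ F m, a < c := by
    intro n m h
    induction m with
    | zero => omega
    | succ m ih =>
      intro a ha c hc
      rcases Nat.lt_succ_iff_lt_or_eq.mp h with h' | rfl
      · obtain ⟨z, hz⟩ := hne m
        exact lt_trans (ih h' a ha z hz) (hconsec m z hz c hc)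
      · exact hconsec n a ha c hc
  have hdisjF : ∀ G : Finset ℕ, (↑G : Set ℕ).PairwiseDisjoint F := by
    intro G x _ y _ hxy
    have key : ∀ u v : ℕ, u < v → Disjoint (F u) (F v) := by
      intro u v huv
      rw [Finset.disjoint_left]
      intro z hz hz'
      exact absurd (hchain u v huv z hz z hz') (lt_irrefl z)
    rcases lt_or_gt_of_ne hxy with h | h
    · exact key x y h
    · exact (key y x h).symm
  refine ⟨i, F, hne, hconsec, ?_⟩
  intro G hG
  have key : ∑ j ∈ G.biUnion F, 2 ^ j = ∑ n ∈ G, csumN b n := by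
    rw [Finset.sum_biUnion (hdisjF G)]
    exact Finset.sum_congr rfl fun n _ => suppN_sum_two_pow _
  have h1 : suppN (∑ n ∈ G, csumN b n) = G.biUnion F := by
    rw [← key, suppN_encode]
  have h2 := hsum_mem G hG
  rw [hB] at h2
  rw [← h1]
  exact h2.2
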